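/- arXiv:2603.12398 — 2 statements merged into one kernel-verified Lean document; each statement's English description precedes it below -/
import Mathlib

section
/- Let x : [0,∞) → ℂⁿ solve ẋ = F₂(x^{⊗2}) + F₁x + F₀(t), and let P ≻ 0 be Hermitian with μ_P(F₁) = λ_max((P^{1/2}F₁P^{−1/2} + h.c.)/2) and β_P = sup_{x≠0} Re⟨x, F₂(x^{⊗2})⟩_P / ‖x‖_P² < ∞. Then for every γ > 0, setting κ = 2μ_P(F₁) + 2β_P + γ, the energy V(t) = ‖x(t)‖_P² satisfies the differential inequality V̇(t) ≤ κ·V(t) + (1/γ)·‖F₀(t)‖_P², and consequently ‖x(t)‖_P² ≤ e^{κt}‖x(0)‖_P² + ((e^{κt}−1)/κ)·(1/γ)·sup_{0≤s≤t}‖F₀(s)‖_P². -/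
open Matrix Set
open scoped ComplexOrder

section Aux

variable {n : ℕ}

lemma aux_sym {P : Matrix (Fin n) (Fin n) ℂ} (hP : P.IsHermitian)
    (u v : Fin n → ℂ) :
    star u ⬝ᵥ (P *ᵥ v) = star (star v ⬝ᵥ (P *ᵥ u)) := by
  rw [star_dotProduct]
  congr 1
  rw [star_mulVec, hP.eq, ← dotProduct_mulVec]

lemma aux_hasDerivAt (P : Matrix (Fin n) (Fin n) ℂ) {x : ℝ → Fin n → ℂ}
    {x' : Fin n → ℂ} {t : ℝ} (hx : HasDerivAt x x' t) :
    HasDerivAt (fun s => star (x s) ⬝ᵥ (P *ᵥ x s))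
      (star x' ⬝ᵥ (P *ᵥ x t) + star (x t) ⬝ᵥ (P *ᵥ x')) t := by
  have hxi : ∀ i, HasDerivAt (fun s => x s i) (x' i) t := fun i =>
    (ContinuousLinearMap.proj (R := ℝ) (φ := fun _ : Fin n => ℂ) i).hasFDerivAt.comp_hasDerivAt t
      hx
  have hsum : ∀ i, HasDerivAt (fun s => ∑ j, P i j * x s j) (∑ j, P i j * x' j) t := fun i =>
    HasDerivAt.fun_sum fun j _ => (hxi j).const_mul (P i j)
  have hterm : ∀ i, HasDerivAt (fun s => star (x s i) * ∑ j, P i j * x s j)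
      (star (x' i) * (∑ j, P i j * x t j) + star (x t i) * ∑ j, P i j * x' j) t := fun i =>
    ((hxi i).star).mul (hsum i)
  have h := HasDerivAt.fun_sum (fun i (_ : i ∈ Finset.univ) => hterm i)
  simp only [dotProduct, mulVec, Pi.star_apply, Finset.sum_add_distrib] at h ⊢
  exact h

lemma aux_young {P : Matrix (Fin n) (Fin n) ℂ} (hP : P.PosDef) {γ : ℝ} (hγ : 0 < γ)
    (u v : Fin n → ℂ) :
    2 * (star u ⬝ᵥ (P *ᵥ v)).re ≤
      γ * (star u ⬝ᵥ (P *ᵥ u)).re + (1 / γ) * (star v ⬝ᵥ (P *ᵥ v)).re := by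
  have h0 : 0 ≤ (star ((γ : ℂ) • u - v) ⬝ᵥ (P *ᵥ ((γ : ℂ) • u - v))).re :=
    hP.posSemidef.re_dotProduct_nonneg _
  have hvu : star v ⬝ᵥ (P *ᵥ u) = star (star u ⬝ᵥ (P *ᵥ v)) := aux_sym hP.isHermitian v u
  have hexp : (star ((γ : ℂ) • u - v) ⬝ᵥ (P *ᵥ ((γ : ℂ) • u - v))).re =
      γ ^ 2 * (star u ⬝ᵥ (P *ᵥ u)).re - 2 * γ * (star u ⬝ᵥ (P *ᵥ v)).re +
        (star v ⬝ᵥ (P *ᵥ v)).re := by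
    simp only [star_sub, star_smul, mulVec_sub, mulVec_smul, sub_dotProduct,
      dotProduct_sub, smul_dotProduct, dotProduct_smul, Complex.star_def,
      Complex.conj_ofReal, smul_eq_mul, hvu]
    simp only [← Complex.ofReal_pow, Complex.add_re, Complex.sub_re, Complex.neg_re,
      Complex.re_ofReal_mul, Complex.conj_re]
    ring
  rw [hexp] at h0
  set A := (star u ⬝ᵥ (P *ᵥ u)).re
  set B := (star u ⬝ᵥ (P *ᵥ v)).re
  set C := (star v ⬝ᵥ (P *ᵥ v)).re
  have h1 : 2 * γ * B ≤ γ ^ 2 * A + C := by linarith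
  calc 2 * B = (2 * γ * B) / γ := by field_simp
    _ ≤ (γ ^ 2 * A + C) / γ := by gcongr
    _ = γ * A + (1 / γ) * C := by field_simp

end Aux

/-- Energy estimate for the OU-driven quadratic system `ẋ = F₂(x^{⊗2}) + F₁x + F₀(t)`:
with the Lyapunov energy `V(t) = ‖x(t)‖_P² = (x(t)† P x(t)).re`, the logarithmic-norm bound
`Re⟨z, F₁z⟩_P ≤ μ_P·‖z‖_P²`, the one-sided nonlinearity bound
`Re⟨z, F₂(z^{⊗2})⟩_P ≤ β_P·‖z‖_P²`, and any `γ > 0`, setting `κ = 2μ_P + 2β_P + γ` one has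
`V̇(t) ≤ κ·V(t) + (1/γ)·‖F₀(t)‖_P²` and the Grönwall consequence
`V(t) ≤ e^{κt}V(0) + ((e^{κt}−1)/κ)·(1/γ)·sup_{[0,t]}‖F₀‖_P²` (with `(e^{κt}−1)/κ = t`
when `κ = 0`). -/
theorem lyapunov_energy_estimate {n : ℕ}
    (P F₁ : Matrix (Fin n) (Fin n) ℂ) (F₂ : Matrix (Fin n) (Fin n × Fin n) ℂ)
    (hP : P.PosDef)
    (x F₀ : ℝ → (Fin n → ℂ))
    (hF₀ : Continuous F₀)
    (hx : ∀ t : ℝ, HasDerivAt x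
      ((F₂ *ᵥ fun p => x t p.1 * x t p.2) + F₁ *ᵥ x t + F₀ t) t)
    (μP βP γ κ : ℝ) (hγ : 0 < γ) (hκ : κ = 2 * μP + 2 * βP + γ)
    (hμ : ∀ z : Fin n → ℂ,
      (star z ⬝ᵥ (P *ᵥ (F₁ *ᵥ z))).re ≤ μP * (star z ⬝ᵥ (P *ᵥ z)).re)
    (hβ : ∀ z : Fin n → ℂ,
      (star z ⬝ᵥ (P *ᵥ (F₂ *ᵥ fun p => z p.1 * z p.2))).re ≤
        βP * (star z ⬝ᵥ (P *ᵥ z)).re) :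
    (∀ t : ℝ, deriv (fun s => (star (x s) ⬝ᵥ (P *ᵥ x s)).re) t ≤
        κ * (star (x t) ⬝ᵥ (P *ᵥ x t)).re +
          (1 / γ) * (star (F₀ t) ⬝ᵥ (P *ᵥ F₀ t)).re) ∧
      ∀ t : ℝ, 0 ≤ t →
        (star (x t) ⬝ᵥ (P *ᵥ x t)).re ≤
          Real.exp (κ * t) * (star (x 0) ⬝ᵥ (P *ᵥ x 0)).re +
            (if κ = 0 then t else (Real.exp (κ * t) - 1) / κ) *
              ((1 / γ) *
                sSup ((fun s => (star (F₀ s) ⬝ᵥ (P *ᵥ F₀ s)).re) '' Set.Icc 0 t)) := by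
  set V : ℝ → ℝ := fun s => (star (x s) ⬝ᵥ (P *ᵥ x s)).re with hV
  set W : ℝ → ℝ := fun s => (star (F₀ s) ⬝ᵥ (P *ᵥ F₀ s)).re with hW
  set x' : ℝ → Fin n → ℂ :=
    fun t => (F₂ *ᵥ fun p => x t p.1 * x t p.2) + F₁ *ᵥ x t + F₀ t with hx'
  -- derivative of V
  have hVD : ∀ t : ℝ, HasDerivAt V
      (star (x' t) ⬝ᵥ (P *ᵥ x t) + star (x t) ⬝ᵥ (P *ᵥ x' t)).re t := by
    intro t
    exact (Complex.reCLM.hasFDerivAt.comp_hasDerivAt t (aux_hasDerivAt P (hx t)))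
  -- pointwise bound on deriv value
  have hbound : ∀ t : ℝ,
      (star (x' t) ⬝ᵥ (P *ᵥ x t) + star (x t) ⬝ᵥ (P *ᵥ x' t)).re ≤ κ * V t + (1 / γ) * W t := by
    intro t
    have hsym := aux_sym hP.isHermitian (x t) (x' t)
    have h2 : (star (x' t) ⬝ᵥ (P *ᵥ x t) + star (x t) ⬝ᵥ (P *ᵥ x' t)).re =
        2 * (star (x t) ⬝ᵥ (P *ᵥ x' t)).re := by
      rw [Complex.add_re]
      have : (star (x' t) ⬝ᵥ (P *ᵥ x t)).re = (star (x t) ⬝ᵥ (P *ᵥ x' t)).re := by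
        rw [aux_sym hP.isHermitian (x' t) (x t), Complex.star_def, Complex.conj_re]
      rw [this]; ring
    rw [h2]
    have hsplit : star (x t) ⬝ᵥ (P *ᵥ x' t) =
        star (x t) ⬝ᵥ (P *ᵥ (F₂ *ᵥ fun p => x t p.1 * x t p.2)) +
          star (x t) ⬝ᵥ (P *ᵥ (F₁ *ᵥ x t)) + star (x t) ⬝ᵥ (P *ᵥ F₀ t) := by
      simp [hx', mulVec_add, dotProduct_add]
    rw [hsplit]
    have hb2 := hβ (x t)
    have hb1 := hμ (x t)
    have hb0 := aux_young hP hγ (x t) (F₀ t)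
    simp only [Complex.add_re]
    have : V t = (star (x t) ⬝ᵥ (P *ᵥ x t)).re := rfl
    rw [hκ]
    nlinarith [hb2, hb1, hb0]
  constructor
  · intro t
    have := (hVD t).deriv
    calc deriv V t = _ := this
    _ ≤ κ * V t + (1 / γ) * W t := hbound t
  · intro t ht
    -- continuity of W and sSup bound
    have hWc : Continuous W := by
      have : Continuous fun s => star (F₀ s) ⬝ᵥ (P *ᵥ F₀ s) := by
        simp only [dotProduct, mulVec, Pi.star_apply]
        exact continuous_finset_sum _ fun i _ =>
          (Complex.continuous_conj.comp ((continuous_apply i).comp hF₀)).mul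
            (continuous_finset_sum _ fun j _ =>
              continuous_const.mul ((continuous_apply j).comp hF₀))
      exact Complex.continuous_re.comp this
    set S : ℝ := sSup (W '' Set.Icc 0 t) with hS
    have hbdd : BddAbove (W '' Set.Icc 0 t) := (isCompact_Icc.image hWc).bddAbove
    have hWle : ∀ s ∈ Set.Icc 0 t, W s ≤ S := fun s hs =>
      le_csSup hbdd (mem_image_of_mem W hs)
    have key := le_gronwallBound_of_liminf_deriv_right_le (f := V)
      (f' := fun s => (star (x' s) ⬝ᵥ (P *ᵥ x s) + star (x s) ⬝ᵥ (P *ᵥ x' s)).re)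
      (δ := V 0) (K := κ) (ε := (1 / γ) * S) (a := 0) (b := t)
      (fun s _ => (hVD s).continuousAt.continuousWithinAt)
      (fun s _ r hr => by
        have := ((hVD s).hasDerivWithinAt (s := Set.Ici s)).liminf_right_slope_le hr
        refine this.mono fun z hz => ?_
        rwa [slope_def_field, div_eq_inv_mul] at hz)
      le_rfl
      (fun s hs => by
        have h1 := hbound s
        have h2 : W s ≤ S := hWle s ⟨hs.1, hs.2.le⟩
        have : (1 / γ) * W s ≤ (1 / γ) * S := by
          apply mul_le_mul_of_nonneg_left h2 (by positivity)
        linarith)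
      t ⟨ht, le_rfl⟩
    rw [sub_zero] at key
    refine key.trans_eq ?_
    unfold gronwallBound
    split_ifs with h
    · subst h
      simp [mul_comm]
      rfl
    · ring
end

section
/- Let H : [0,T] → ℂ^{n×n} satisfy ‖H(t)‖ ≤ Λ for all t and the Hölder condition ‖H(t) − H(s)‖ ≤ C·|t−s|^α for some α ∈ (0,1], C ≥ 0. Fix a grid with mesh h = T/M and left-endpoint map τ(t) = h·⌊t/h⌋. Then for each k ≥ 1, the left-endpoint Riemann discretization Q_k of the ordered Dyson integral I_k = ∫_{0≤t₁≤⋯≤t_k≤T} H(t_k)⋯H(t₁) dt satisfies ‖I_k − Q_k‖ ≤ C·Λ^{k−1}·T^k·h^α/(k−1)!, and summing over 1 ≤ k ≤ K gives Σ_{k=1}^K ‖I_k − Q_k‖ ≤ C·T·e^{ΛT}·h^α. -/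
open MeasureTheory

open ENNReal

/-- The ordered simplex `{t : 0 ≤ t₁ ≤ ⋯ ≤ t_k ≤ T}`. -/
def orderedSimplex (T : ℝ) (k : ℕ) : Set (Fin k → ℝ) :=
  {t | Monotone t ∧ ∀ i, t i ∈ Set.Icc 0 T}

/-- The left-endpoint map `τ(t) = h·⌊t/h⌋` onto a grid of mesh `h`. -/
noncomputable def leftGrid (h t : ℝ) : ℝ := h * (⌊t / h⌋ : ℤ)

/-- The `k`-th ordered Dyson integral `I_k`. -/
noncomputable def dysonIntegral {n : ℕ} (T : ℝ)
    (H : ℝ → EuclideanSpace ℂ (Fin n) →L[ℂ] EuclideanSpace ℂ (Fin n)) (k : ℕ) :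
    EuclideanSpace ℂ (Fin n) →L[ℂ] EuclideanSpace ℂ (Fin n) :=
  ∫ t in orderedSimplex T k, (List.ofFn fun i => H (t i)).reverse.prod

/-- The left-endpoint Riemann discretization `Q_k` of the ordered Dyson integral,
obtained by replacing each time `t_j` by its left gridpoint `τ(t_j)`. -/
noncomputable def dysonRiemann {n : ℕ} (T h : ℝ)
    (H : ℝ → EuclideanSpace ℂ (Fin n) →L[ℂ] EuclideanSpace ℂ (Fin n)) (k : ℕ) :
    EuclideanSpace ℂ (Fin n) →L[ℂ] EuclideanSpace ℂ (Fin n) :=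
  ∫ t in orderedSimplex T k, (List.ofFn fun i => H (leftGrid h (t i))).reverse.prod



section ListLemmas
variable {A : Type*} [NormedRing A] {Λ δ : ℝ}

lemma aux_norm_revProd_le (h1 : ‖(1:A)‖ ≤ 1) (hΛ : 0 ≤ Λ) :
    ∀ (k : ℕ) (f : Fin k → A), (∀ i, ‖f i‖ ≤ Λ) → ‖(List.ofFn f).reverse.prod‖ ≤ Λ ^ k := by
  intro k
  induction k with
  | zero => intro f _; simpa using h1
  | succ m ih =>
    intro f hf
    rw [List.ofFn_succ', List.concat_eq_append, List.reverse_concat', List.prod_cons]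
    calc ‖f (Fin.last m) * (List.ofFn fun i => f i.castSucc).reverse.prod‖
        ≤ ‖f (Fin.last m)‖ * ‖(List.ofFn fun i => f i.castSucc).reverse.prod‖ := norm_mul_le _ _
      _ ≤ Λ * Λ ^ m := by
          apply mul_le_mul (hf _) (ih _ fun i => hf _) (norm_nonneg _) hΛ
      _ = Λ ^ (m + 1) := (pow_succ' Λ m).symm

lemma aux_norm_revProd_sub (h1 : ‖(1:A)‖ ≤ 1) (hΛ : 0 ≤ Λ) (hδ : 0 ≤ δ) :
    ∀ (k : ℕ) (f g : Fin k → A), (∀ i, ‖f i‖ ≤ Λ) → (∀ i, ‖g i‖ ≤ Λ) →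
      (∀ i, ‖f i - g i‖ ≤ δ) →
      ‖(List.ofFn f).reverse.prod - (List.ofFn g).reverse.prod‖ ≤ k * Λ ^ (k - 1) * δ := by
  intro k
  induction k with
  | zero => intro f g _ _ _; simp
  | succ m ih =>
    intro f g hf hg hfg
    rw [List.ofFn_succ', List.ofFn_succ' (f := g), List.concat_eq_append, List.concat_eq_append,
      List.reverse_concat', List.reverse_concat', List.prod_cons, List.prod_cons]
    set a := f (Fin.last m)
    set b := g (Fin.last m)
    set P := (List.ofFn fun i => f i.castSucc).reverse.prod
    set Q := (List.ofFn fun i => g i.castSucc).reverse.prod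
    have hP : ‖P‖ ≤ Λ ^ m := aux_norm_revProd_le h1 hΛ m _ fun i => hf _
    have hPQ : ‖P - Q‖ ≤ m * Λ ^ (m - 1) * δ := ih _ _ (fun i => hf _) (fun i => hg _) fun i => hfg _
    have key : a * P - b * Q = (a - b) * P + b * (P - Q) := by
      rw [sub_mul, mul_sub]; abel
    calc ‖a * P - b * Q‖ ≤ ‖(a - b) * P‖ + ‖b * (P - Q)‖ := by rw [key]; exact norm_add_le _ _
      _ ≤ ‖a - b‖ * ‖P‖ + ‖b‖ * ‖P - Q‖ := add_le_add (norm_mul_le _ _) (norm_mul_le _ _)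
      _ ≤ δ * Λ ^ m + Λ * (m * Λ ^ (m - 1) * δ) := by
          apply add_le_add
          · exact mul_le_mul (hfg _) hP (norm_nonneg _) hδ
          · exact mul_le_mul (hg _) hPQ (norm_nonneg _) hΛ
      _ ≤ δ * Λ ^ m + m * Λ ^ m * δ := by
          refine add_le_add le_rfl ?_
          rcases Nat.eq_zero_or_pos m with hm | hm
          · simp [hm]
          · have hpow : Λ * Λ ^ (m - 1) = Λ ^ m := by
              rw [← pow_succ']; congr 1; omega
            rw [show Λ * (↑m * Λ ^ (m - 1) * δ) = ↑m * (Λ * Λ ^ (m - 1)) * δ from by ring, hpow]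
      _ = (m + 1 : ℕ) * Λ ^ m * δ := by push_cast; ring
      _ = (m + 1 : ℕ) * Λ ^ (m + 1 - 1) * δ := by simp

lemma aux_sm_revProd {X : Type*} [MeasurableSpace X] :
    ∀ (k : ℕ) (g : Fin k → X → A), (∀ i, StronglyMeasurable (g i)) →
      StronglyMeasurable (fun x => (List.ofFn fun i => g i x).reverse.prod) := by
  intro k
  induction k with
  | zero => intro g _; simpa using stronglyMeasurable_const
  | succ m ih =>
    intro g hg
    simp only [List.ofFn_succ', List.concat_eq_append, List.reverse_concat', List.prod_cons]
    exact (hg _).mul (ih _ fun i => hg _)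

end ListLemmas




lemma aux_isClosed_orderedSimplex (T : ℝ) (k : ℕ) : IsClosed (orderedSimplex T k) := by
  have h1 : IsClosed {t : Fin k → ℝ | Monotone t} := by
    have : {t : Fin k → ℝ | Monotone t} = ⋂ (i) (j), {t | i ≤ j → t i ≤ t j} := by
      ext t; simp [Monotone, Set.mem_iInter]
    rw [this]
    refine isClosed_iInter fun i => isClosed_iInter fun j => ?_
    by_cases hij : i ≤ j
    · simp only [hij, forall_true_left]
      exact isClosed_le (continuous_apply i) (continuous_apply j)
    · have : {t : Fin k → ℝ | i ≤ j → t i ≤ t j} = Set.univ := by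
        ext t; simp [hij]
      rw [this]; exact isClosed_univ
  have h2 : IsClosed {t : Fin k → ℝ | ∀ i, t i ∈ Set.Icc 0 T} := by
    have : {t : Fin k → ℝ | ∀ i, t i ∈ Set.Icc 0 T} = ⋂ i, (fun t : Fin k → ℝ => t i) ⁻¹' Set.Icc 0 T := by
      ext t; simp
    rw [this]
    exact isClosed_iInter fun i => isClosed_Icc.preimage (continuous_apply i)
  exact h1.inter h2

lemma aux_measurableSet_orderedSimplex (T : ℝ) (k : ℕ) : MeasurableSet (orderedSimplex T k) :=
  (aux_isClosed_orderedSimplex T k).measurableSet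

lemma aux_volume_orderedSimplex (T : ℝ) (hT : 0 ≤ T) (k : ℕ) :
    volume (orderedSimplex T k) ≤ ENNReal.ofReal (T ^ k / (Nat.factorial k : ℝ)) := by
  classical
  set S := orderedSimplex T k
  set Sσ : Equiv.Perm (Fin k) → Set (Fin k → ℝ) := fun σ => {t | (t ∘ σ) ∈ S} with hSσ
  have hmeasσ : ∀ σ, MeasurableSet (Sσ σ) := by
    intro σ
    have : Measurable fun t : Fin k → ℝ => t ∘ σ :=
      measurable_pi_lambda _ fun i => measurable_pi_apply (σ i)
    exact this (aux_measurableSet_orderedSimplex T k)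
  have hvol : ∀ σ, volume (Sσ σ) = volume S := by
    intro σ
    have hmp := (volume_measurePreserving_piCongrLeft (fun _ : Fin k => ℝ)
      ((σ : Fin k ≃ Fin k).symm))
    have heq : ∀ t : Fin k → ℝ,
        (MeasurableEquiv.piCongrLeft (fun _ : Fin k => ℝ) (σ : Fin k ≃ Fin k).symm) t = t ∘ σ := by
      intro t; funext b
      have := Equiv.piCongrLeft_apply_apply (fun _ : Fin k => ℝ) (σ : Fin k ≃ Fin k).symm t (σ b)
      simpa [MeasurableEquiv.coe_piCongrLeft] using this
    have := hmp.measure_preimage (aux_measurableSet_orderedSimplex T k).nullMeasurableSet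
    calc volume (Sσ σ) = volume ((MeasurableEquiv.piCongrLeft (fun _ : Fin k => ℝ)
          (σ : Fin k ≃ Fin k).symm) ⁻¹' S) := by
          congr 1; ext t; simp [hSσ, heq t, Set.mem_preimage]
      _ = volume S := this
  -- null set of non-injective tuples
  have hnull : volume {t : Fin k → ℝ | ¬ Function.Injective t} = 0 := by
    have hsub : {t : Fin k → ℝ | ¬ Function.Injective t} ⊆
        ⋃ (i : Fin k) (j : Fin k) (_ : i ≠ j), {t : Fin k → ℝ | t i = t j} := by
      intro t ht
      simp only [Function.Injective, not_forall] at ht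
      obtain ⟨i, j, hij, hne⟩ := ht
      exact Set.mem_iUnion.2 ⟨i, Set.mem_iUnion.2 ⟨j, Set.mem_iUnion.2 ⟨hne, hij⟩⟩⟩
    refine measure_mono_null hsub ?_
    refine measure_iUnion_null fun i => measure_iUnion_null fun j => measure_iUnion_null fun hij => ?_
    have hker : {t : Fin k → ℝ | t i = t j} =
        (LinearMap.ker ((LinearMap.proj i : (Fin k → ℝ) →ₗ[ℝ] ℝ) - LinearMap.proj j) : Set (Fin k → ℝ)) := by
      ext t
      simp [LinearMap.mem_ker, sub_eq_zero]
    rw [hker]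
    apply Measure.addHaar_submodule
    intro htop
    have : (Pi.single i 1 : Fin k → ℝ) ∈ LinearMap.ker
        ((LinearMap.proj i : (Fin k → ℝ) →ₗ[ℝ] ℝ) - LinearMap.proj j) := htop ▸ Submodule.mem_top
    simp [LinearMap.mem_ker, Pi.single_apply, hij, (Ne.symm hij), sub_eq_zero] at this
  have hdisj : Pairwise (Function.onFun (AEDisjoint volume) Sσ) := by
    intro σ σ' hne
    refine measure_mono_null (fun t ht => ?_) hnull
    simp only [Set.mem_inter_iff, hSσ, Set.mem_setOf_eq] at ht
    obtain ⟨⟨hm1, hb1⟩, ⟨hm2, _⟩⟩ := ht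
    by_contra hinj
    simp only [Set.mem_setOf_eq, not_not] at hinj
    have hs1 : StrictMono (t ∘ σ) :=
      Monotone.strictMono_of_injective hm1 (hinj.comp σ.injective)
    have hs2 : StrictMono (t ∘ σ') :=
      Monotone.strictMono_of_injective hm2 (hinj.comp σ'.injective)
    have hr : Set.range (t ∘ σ) = Set.range (t ∘ σ') := by
      rw [Set.range_comp, Set.range_comp, Equiv.range_eq_univ, Equiv.range_eq_univ]
    have inst : WellFoundedLT (Fin k) := inferInstance
    have heq : t ∘ σ = t ∘ σ' := (@StrictMono.range_inj (Fin k) ℝ _ _ inst _ _ hs1 hs2).1 hr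
    apply hne
    ext i
    exact congrArg _ (hinj (congrFun heq i))
  have hunion : (⋃ σ, Sσ σ) = Set.pi Set.univ (fun _ : Fin k => Set.Icc (0:ℝ) T) := by
    ext t
    simp only [Set.mem_iUnion, Set.mem_univ_pi, hSσ, Set.mem_setOf_eq]
    constructor
    · rintro ⟨σ, _, hb⟩ i
      have := hb (σ.symm i)
      simpa using this
    · intro hb
      exact ⟨Tuple.sort t, Tuple.monotone_sort t, fun i => hb _⟩
  have hsum : ∑' σ : Equiv.Perm (Fin k), volume (Sσ σ) =
      volume (Set.pi Set.univ (fun _ : Fin k => Set.Icc (0:ℝ) T)) := by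
    rw [← hunion]
    exact (measure_iUnion₀ hdisj fun σ => (hmeasσ σ).nullMeasurableSet).symm
  have hcube : volume (Set.pi Set.univ (fun _ : Fin k => Set.Icc (0:ℝ) T)) =
      ENNReal.ofReal T ^ k := by
    rw [volume_pi_pi]
    simp [Real.volume_Icc]
  have hcard : ∑' σ : Equiv.Perm (Fin k), volume (Sσ σ) =
      (Nat.factorial k : ℝ≥0∞) * volume S := by
    rw [tsum_fintype]
    simp only [hvol]
    rw [Finset.sum_const, Finset.card_univ, Fintype.card_perm, Fintype.card_fin, nsmul_eq_mul]
  have hkey : (Nat.factorial k : ℝ≥0∞) * volume S = ENNReal.ofReal T ^ k := by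
    rw [← hcard, hsum, hcube]
  have hfac0 : (Nat.factorial k : ℝ≥0∞) ≠ 0 := by
    exact_mod_cast Nat.cast_ne_zero.2 (Nat.factorial_ne_zero k)
  have hfact : volume S = ENNReal.ofReal T ^ k / (Nat.factorial k : ℝ≥0∞) :=
    (ENNReal.eq_div_iff hfac0 (ENNReal.natCast_ne_top _)).2 hkey
  rw [hfact, ← ENNReal.ofReal_pow hT, ENNReal.ofReal_div_of_pos
    (by exact_mod_cast Nat.factorial_pos k), ENNReal.ofReal_natCast]





section Main

variable {n : ℕ}

lemma aux_norm_one_le :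
    ‖(1 : EuclideanSpace ℂ (Fin n) →L[ℂ] EuclideanSpace ℂ (Fin n))‖ ≤ 1 := by
  rw [ContinuousLinearMap.one_def]
  exact ContinuousLinearMap.norm_id_le

lemma aux_leftGrid_mem {h t T : ℝ} (hh : 0 < h) (ht : t ∈ Set.Icc 0 T) :
    leftGrid h t ∈ Set.Icc 0 T := by
  constructor
  · exact mul_nonneg hh.le (Int.cast_nonneg (Int.floor_nonneg.2 (div_nonneg ht.1 hh.le)))
  · calc leftGrid h t ≤ h * (t / h) :=
        mul_le_mul_of_nonneg_left (Int.floor_le _) hh.le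
      _ = t := by field_simp
      _ ≤ T := ht.2

lemma aux_leftGrid_close {h t : ℝ} (hh : 0 < h) (ht : 0 ≤ t) :
    |t - leftGrid h t| ≤ h := by
  have h1 : leftGrid h t ≤ t := by
    calc leftGrid h t ≤ h * (t / h) := mul_le_mul_of_nonneg_left (Int.floor_le _) hh.le
      _ = t := by field_simp
  have h2 : t - leftGrid h t ≤ h := by
    have := Int.lt_floor_add_one (t / h)
    have h3 : t / h < (⌊t / h⌋ : ℝ) + 1 := by exact_mod_cast this
    have h4 : t < h * ((⌊t / h⌋ : ℝ) + 1) := by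
      calc t = h * (t / h) := by field_simp
        _ < h * ((⌊t / h⌋ : ℝ) + 1) := by exact mul_lt_mul_of_pos_left h3 hh
    unfold leftGrid
    nlinarith
  rw [abs_of_nonneg (by linarith)]
  exact h2

lemma aux_measurable_leftGrid (h : ℝ) : Measurable (leftGrid h) := by
  unfold leftGrid
  exact measurable_const.mul
    ((Measurable.of_discrete (f := fun z : ℤ => (z : ℝ))).comp
      ((measurable_id.div_const h).floor))

end Main

/-- Discretization error of the ordered Dyson integrals under a Hölder condition:
`‖I_k − Q_k‖ ≤ C·Λ^{k−1}·T^k·h^α/(k−1)!`, and summing over `1 ≤ k ≤ K` gives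
`Σ_{k=1}^K ‖I_k − Q_k‖ ≤ C·T·e^{ΛT}·h^α`. -/
theorem dyson_riemann_discretization_error {n : ℕ}
    (T : ℝ) (hT : 0 < T) (M : ℕ) (hM : 0 < M) (h : ℝ) (hh : h = T / M)
    (α : ℝ) (hα : α ∈ Set.Ioc (0 : ℝ) 1) (C Λ : ℝ) (hC : 0 ≤ C) (hΛ : 0 ≤ Λ)
    (H : ℝ → EuclideanSpace ℂ (Fin n) →L[ℂ] EuclideanSpace ℂ (Fin n))
    (hmeas : MeasureTheory.StronglyMeasurable H)
    (hbound : ∀ t ∈ Set.Icc 0 T, ‖H t‖ ≤ Λ)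
    (hholder : ∀ s ∈ Set.Icc 0 T, ∀ t ∈ Set.Icc 0 T, ‖H t - H s‖ ≤ C * |t - s| ^ α) :
    (∀ k : ℕ, 1 ≤ k →
        ‖dysonIntegral T H k - dysonRiemann T h H k‖ ≤
          C * Λ ^ (k - 1) * T ^ k * h ^ α / (Nat.factorial (k - 1) : ℝ)) ∧
      ∀ K : ℕ,
        (∑ k ∈ Finset.Icc 1 K, ‖dysonIntegral T H k - dysonRiemann T h H k‖) ≤
          C * T * Real.exp (Λ * T) * h ^ α := by
  obtain ⟨hα0, hα1⟩ := hα
  have hh0 : 0 < h := by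
    rw [hh]; exact div_pos hT (by exact_mod_cast hM)
  have hhα : 0 ≤ h ^ α := Real.rpow_nonneg hh0.le α
  have h1 := aux_norm_one_le (n := n)
  have main : ∀ k : ℕ, 1 ≤ k →
      ‖dysonIntegral T H k - dysonRiemann T h H k‖ ≤
        C * Λ ^ (k - 1) * T ^ k * h ^ α / (Nat.factorial (k - 1) : ℝ) := by
    intro k hk
    set S := orderedSimplex T k with hS
    have hmeasS := aux_measurableSet_orderedSimplex T k
    have hvolS := aux_volume_orderedSimplex T hT.le k
    have hfinS : volume S < ∞ := lt_of_le_of_lt hvolS ENNReal.ofReal_lt_top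
    set F : (Fin k → ℝ) → (EuclideanSpace ℂ (Fin n) →L[ℂ] EuclideanSpace ℂ (Fin n)) :=
      fun t => (List.ofFn fun i => H (t i)).reverse.prod with hF
    set G : (Fin k → ℝ) → (EuclideanSpace ℂ (Fin n) →L[ℂ] EuclideanSpace ℂ (Fin n)) :=
      fun t => (List.ofFn fun i => H (leftGrid h (t i))).reverse.prod with hG
    have hsmF : StronglyMeasurable F :=
      aux_sm_revProd k _ (fun i => hmeas.comp_measurable (measurable_pi_apply i))
    have hsmG : StronglyMeasurable G :=
      aux_sm_revProd k _ (fun i =>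
        hmeas.comp_measurable ((aux_measurable_leftGrid h).comp (measurable_pi_apply i)))
    have hFb : ∀ t ∈ S, ‖F t‖ ≤ Λ ^ k := fun t ht =>
      aux_norm_revProd_le h1 hΛ k _ (fun i => hbound _ (ht.2 i))
    have hGb : ∀ t ∈ S, ‖G t‖ ≤ Λ ^ k := fun t ht =>
      aux_norm_revProd_le h1 hΛ k _ (fun i => hbound _ (aux_leftGrid_mem hh0 (ht.2 i)))
    have hintF : IntegrableOn F S :=
      Measure.integrableOn_of_bounded hfinS.ne hsmF.aestronglyMeasurable
        ((ae_restrict_iff' hmeasS).2 (Filter.Eventually.of_forall hFb))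
    have hintG : IntegrableOn G S :=
      Measure.integrableOn_of_bounded hfinS.ne hsmG.aestronglyMeasurable
        ((ae_restrict_iff' hmeasS).2 (Filter.Eventually.of_forall hGb))
    have hdiff : ∀ t ∈ S, ‖F t - G t‖ ≤ (k : ℝ) * Λ ^ (k - 1) * (C * h ^ α) := by
      intro t ht
      refine aux_norm_revProd_sub h1 hΛ (mul_nonneg hC hhα) k _ _
        (fun i => hbound _ (ht.2 i))
        (fun i => hbound _ (aux_leftGrid_mem hh0 (ht.2 i))) ?_
      intro i
      have hmem := ht.2 i
      have hlg := aux_leftGrid_mem hh0 hmem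
      have hcl := aux_leftGrid_close hh0 hmem.1
      calc ‖H (t i) - H (leftGrid h (t i))‖ ≤ C * |t i - leftGrid h (t i)| ^ α :=
            hholder _ hlg _ hmem
        _ ≤ C * h ^ α := by
            refine mul_le_mul_of_nonneg_left ?_ hC
            exact Real.rpow_le_rpow (abs_nonneg _) hcl hα0.le
    have hdi : dysonIntegral T H k - dysonRiemann T h H k = ∫ t in S, (F t - G t) := by
      rw [show dysonIntegral T H k = ∫ t in S, F t from rfl,
        show dysonRiemann T h H k = ∫ t in S, G t from rfl,
        ← integral_sub hintF hintG]
    rw [hdi]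
    have hnorm := norm_setIntegral_le_of_norm_le_const (μ := volume) (s := S)
      (f := fun t => F t - G t) hfinS hdiff
    refine hnorm.trans ?_
    have htoReal : (volume S).toReal ≤ T ^ k / (Nat.factorial k : ℝ) :=
      ENNReal.toReal_le_of_le_ofReal (by positivity) hvolS
    calc ((k : ℝ) * Λ ^ (k - 1) * (C * h ^ α)) * (volume S).toReal
        ≤ ((k : ℝ) * Λ ^ (k - 1) * (C * h ^ α)) * (T ^ k / (Nat.factorial k : ℝ)) :=
          mul_le_mul_of_nonneg_left htoReal (by positivity)
      _ = C * Λ ^ (k - 1) * T ^ k * h ^ α / (Nat.factorial (k - 1) : ℝ) := by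
          have hfac : (Nat.factorial k : ℝ) = (k : ℝ) * (Nat.factorial (k - 1) : ℝ) := by
            rw [← Nat.mul_factorial_pred (by omega : k ≠ 0)]
            push_cast
            ring
          have hk0 : (k : ℝ) ≠ 0 := by positivity
          have hf0 : (Nat.factorial (k - 1) : ℝ) ≠ 0 := by
            exact_mod_cast Nat.factorial_ne_zero (k - 1)
          rw [hfac]
          field_simp
  refine ⟨main, ?_⟩
  intro K
  calc ∑ k ∈ Finset.Icc 1 K, ‖dysonIntegral T H k - dysonRiemann T h H k‖
      ≤ ∑ k ∈ Finset.Icc 1 K, C * Λ ^ (k - 1) * T ^ k * h ^ α / (Nat.factorial (k - 1) : ℝ) :=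
        Finset.sum_le_sum fun k hk => main k (Finset.mem_Icc.1 hk).1
    _ = ∑ i ∈ Finset.range K, C * Λ ^ i * T ^ (i + 1) * h ^ α / (Nat.factorial i : ℝ) := by
        rw [← Finset.Ico_add_one_right_eq_Icc, Finset.sum_Ico_eq_sum_range]
        refine Finset.sum_congr (by norm_num) fun i _ => ?_
        congr 1 <;> simp [Nat.add_sub_cancel_left, Nat.add_comm 1 i]
    _ = (C * T * h ^ α) * ∑ i ∈ Finset.range K, (Λ * T) ^ i / (Nat.factorial i : ℝ) := by
        rw [Finset.mul_sum]
        refine Finset.sum_congr rfl fun i _ => ?_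
        rw [mul_pow]
        ring
    _ ≤ (C * T * h ^ α) * Real.exp (Λ * T) := by
        refine mul_le_mul_of_nonneg_left
          (Real.sum_le_exp_of_nonneg (mul_nonneg hΛ hT.le) K) (by positivity)
    _ = C * T * Real.exp (Λ * T) * h ^ α := by ring
end
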